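/- Let t, ζ ∈ ℂ with t ≠ 0, ζ ≠ 0, t⁶ + 1 ≠ 0, and set κ = t³, u = 2t⁴/(t⁶ + 1). Assume ζ ≠ κ, ζ ≠ −κ, κζ ≠ 1, κζ ≠ −1. Define X = ζ^{−2}·((ζ²κ² − 1)/(ζ² − κ²))³, Y = −(ζ − κ)(κζ + 1)/((κζ − 1)(ζ + κ)), and η = (Y + Y⁻¹)·(κ² + 1)². Then u⁶·(X² + 1)(Y + 1)² + X·Y·(κ² + 1)^{−8}·Q₃(η) = 0, where Q₃(η) = η⁴ + 8(2κ² − 1)η³ − 8(κ⁸ − 4κ⁴ + 12κ² − 3)η² − 32(2κ¹⁰ + 3κ⁸ + 8κ⁶ + 4κ⁴ − 6κ² + 1)η + 16(κ² + 1)²(κ² − 1)(κ⁴ − 4κ² + 1)(κ⁶ + 3κ⁴ + 5κ² − 1). -/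

import Mathlib

set_option maxHeartbeats 1000000

/-- The rational parametrization `(X(ζ), Y(ζ))` satisfies the polynomial equation of the
LMO spectral curve of the `(2,2,3)` (D₅) Seifert geometry. -/
theorem stmt_4 (t ζ : ℂ) (ht : t ≠ 0) (hζ : ζ ≠ 0) (ht6 : t ^ 6 + 1 ≠ 0)
    (κ u : ℂ) (hκ : κ = t ^ 3) (hu : u = 2 * t ^ 4 / (t ^ 6 + 1))
    (h1 : ζ ≠ κ) (h2 : ζ ≠ -κ) (h3 : κ * ζ ≠ 1) (h4 : κ * ζ ≠ -1)
    (X Y η : ℂ)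
    (hX : X = (ζ ^ 2)⁻¹ * ((ζ ^ 2 * κ ^ 2 - 1) / (ζ ^ 2 - κ ^ 2)) ^ 3)
    (hY : Y = -((ζ - κ) * (κ * ζ + 1)) / ((κ * ζ - 1) * (ζ + κ)))
    (hη : η = (Y + Y⁻¹) * (κ ^ 2 + 1) ^ 2) :
    u ^ 6 * (X ^ 2 + 1) * (Y + 1) ^ 2 +
      X * Y * ((κ ^ 2 + 1) ^ 8)⁻¹ *
        (η ^ 4 + 8 * (2 * κ ^ 2 - 1) * η ^ 3
          - 8 * (κ ^ 8 - 4 * κ ^ 4 + 12 * κ ^ 2 - 3) * η ^ 2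
          - 32 * (2 * κ ^ 10 + 3 * κ ^ 8 + 8 * κ ^ 6 + 4 * κ ^ 4 - 6 * κ ^ 2 + 1) * η
          + 16 * (κ ^ 2 + 1) ^ 2 * (κ ^ 2 - 1) * (κ ^ 4 - 4 * κ ^ 2 + 1)
            * (κ ^ 6 + 3 * κ ^ 4 + 5 * κ ^ 2 - 1)) = 0 := by
  have ha : ζ - κ ≠ 0 := sub_ne_zero.mpr h1
  have hb : ζ + κ ≠ 0 := fun h => h2 (eq_neg_of_add_eq_zero_left h)
  have hc : κ * ζ - 1 ≠ 0 := sub_ne_zero.mpr h3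
  have hd : κ * ζ + 1 ≠ 0 := fun h => h4 (eq_neg_of_add_eq_zero_left h)
  have hk2 : κ ^ 2 + 1 ≠ 0 := by
    rw [hκ]; have h5 : (t ^ 3) ^ 2 + 1 = t ^ 6 + 1 := by ring
    rw [h5]; exact ht6
  have hP0 : ζ ^ 2 - κ ^ 2 ≠ 0 := by
    have h5 : ζ ^ 2 - κ ^ 2 = (ζ - κ) * (ζ + κ) := by ring
    rw [h5]; exact mul_ne_zero ha hb
  have hM0 : κ ^ 2 * ζ ^ 2 - 1 ≠ 0 := by
    have h5 : κ ^ 2 * ζ ^ 2 - 1 = (κ * ζ - 1) * (κ * ζ + 1) := by ring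
    rw [h5]; exact mul_ne_zero hc hd
  have hcb : (κ * ζ - 1) * (ζ + κ) ≠ 0 := mul_ne_zero hc hb
  have hYne : Y ≠ 0 := by
    rw [hY]
    simp only [neg_div, neg_ne_zero]
    exact div_ne_zero (mul_ne_zero ha hd) hcb
  -- small product-form identities, proved at the raw κ, ζ level
  have hu6 : u ^ 6 * (κ ^ 2 + 1) ^ 6 = 64 * κ ^ 8 := by
    rw [hu, hκ]
    have h5 : (t ^ 3) ^ 2 + 1 = t ^ 6 + 1 := by ring
    rw [h5, div_pow, div_mul_eq_mul_div, div_eq_iff (pow_ne_zero 6 ht6)]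
    ring
  have hX3 : X * (ζ ^ 2 * (ζ ^ 2 - κ ^ 2) ^ 3) = (κ ^ 2 * ζ ^ 2 - 1) ^ 3 := by
    rw [hX]; field_simp
  have hY2 : (Y + 1) * ((κ * ζ - 1) * (ζ + κ)) = 2 * ζ * (κ ^ 2 - 1) := by
    rw [hY, div_add_one hcb, div_mul_cancel₀ _ hcb]; ring
  have hY3 : Y * ((κ * ζ - 1) * (ζ + κ)) ^ 2 = -((ζ ^ 2 - κ ^ 2) * (κ ^ 2 * ζ ^ 2 - 1)) := by
    rw [hY]; field_simp; ring
  have hη4 : η * ((ζ ^ 2 - κ ^ 2) * (κ ^ 2 * ζ ^ 2 - 1))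
      = -2 * (κ ^ 2 + 1) ^ 2 * (κ ^ 2 * (ζ ^ 2 - 1) ^ 2 + ζ ^ 2 * (κ ^ 2 - 1) ^ 2) := by
    have hA : -((ζ - κ) * (κ * ζ + 1)) ≠ 0 := neg_ne_zero.mpr (mul_ne_zero ha hd)
    rw [hη, hY, inv_div, div_add_div _ _ hcb hA, div_mul_eq_mul_div, div_mul_eq_mul_div,
      div_eq_iff (mul_ne_zero hcb hA)]
    ring
  -- abbreviations (opaque atoms)
  set P : ℂ := ζ ^ 2 - κ ^ 2 with hPdef
  set M : ℂ := κ ^ 2 * ζ ^ 2 - 1 with hMdef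
  set N : ℂ := κ ^ 2 * (ζ ^ 2 - 1) ^ 2 + ζ ^ 2 * (κ ^ 2 - 1) ^ 2 with hNdef
  clear_value P M N
  set D : ℂ := ((κ * ζ - 1) * (ζ + κ)) ^ 2 * (κ ^ 2 + 1) ^ 6 * ζ ^ 4 * P ^ 6 * (P * M) ^ 4
    with hDdef
  clear_value D
  have hD : D ≠ 0 := by
    rw [hDdef]
    refine mul_ne_zero (mul_ne_zero (mul_ne_zero (mul_ne_zero ?_ ?_) ?_) ?_) ?_
    · exact pow_ne_zero 2 hcb
    · exact pow_ne_zero 6 hk2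
    · exact pow_ne_zero 4 hζ
    · exact pow_ne_zero 6 hP0
    · exact pow_ne_zero 4 (mul_ne_zero hP0 hM0)
  -- (X^2 + 1) cleared
  have e1 : (X ^ 2 + 1) * (ζ ^ 4 * P ^ 6) = M ^ 6 + ζ ^ 4 * P ^ 6 := by
    calc (X ^ 2 + 1) * (ζ ^ 4 * P ^ 6)
        = (X * (ζ ^ 2 * P ^ 3)) ^ 2 + ζ ^ 4 * P ^ 6 := by ring
      _ = (M ^ 3) ^ 2 + ζ ^ 4 * P ^ 6 := by rw [hX3]
      _ = M ^ 6 + ζ ^ 4 * P ^ 6 := by ring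
  -- the Q-polynomial cleared
  have e4 : (η ^ 4 + 8 * (2 * κ ^ 2 - 1) * η ^ 3
          - 8 * (κ ^ 8 - 4 * κ ^ 4 + 12 * κ ^ 2 - 3) * η ^ 2
          - 32 * (2 * κ ^ 10 + 3 * κ ^ 8 + 8 * κ ^ 6 + 4 * κ ^ 4 - 6 * κ ^ 2 + 1) * η
          + 16 * (κ ^ 2 + 1) ^ 2 * (κ ^ 2 - 1) * (κ ^ 4 - 4 * κ ^ 2 + 1)
            * (κ ^ 6 + 3 * κ ^ 4 + 5 * κ ^ 2 - 1)) * (P * M) ^ 4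
      = (κ ^ 2 + 1) ^ 2 *
          (16 * (κ ^ 2 + 1) ^ 6 * N ^ 4
            - 64 * (2 * κ ^ 2 - 1) * (κ ^ 2 + 1) ^ 4 * N ^ 3 * (P * M)
            - 32 * (κ ^ 8 - 4 * κ ^ 4 + 12 * κ ^ 2 - 3) * (κ ^ 2 + 1) ^ 2 * N ^ 2 * (P * M) ^ 2
            + 64 * (2 * κ ^ 10 + 3 * κ ^ 8 + 8 * κ ^ 6 + 4 * κ ^ 4 - 6 * κ ^ 2 + 1) * N
              * (P * M) ^ 3
            + 16 * (κ ^ 2 - 1) * (κ ^ 4 - 4 * κ ^ 2 + 1) * (κ ^ 6 + 3 * κ ^ 4 + 5 * κ ^ 2 - 1)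
              * (P * M) ^ 4) := by
    calc (η ^ 4 + 8 * (2 * κ ^ 2 - 1) * η ^ 3
          - 8 * (κ ^ 8 - 4 * κ ^ 4 + 12 * κ ^ 2 - 3) * η ^ 2
          - 32 * (2 * κ ^ 10 + 3 * κ ^ 8 + 8 * κ ^ 6 + 4 * κ ^ 4 - 6 * κ ^ 2 + 1) * η
          + 16 * (κ ^ 2 + 1) ^ 2 * (κ ^ 2 - 1) * (κ ^ 4 - 4 * κ ^ 2 + 1)
            * (κ ^ 6 + 3 * κ ^ 4 + 5 * κ ^ 2 - 1)) * (P * M) ^ 4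
        = (η * (P * M)) ^ 4 + 8 * (2 * κ ^ 2 - 1) * (η * (P * M)) ^ 3 * (P * M)
          - 8 * (κ ^ 8 - 4 * κ ^ 4 + 12 * κ ^ 2 - 3) * (η * (P * M)) ^ 2 * (P * M) ^ 2
          - 32 * (2 * κ ^ 10 + 3 * κ ^ 8 + 8 * κ ^ 6 + 4 * κ ^ 4 - 6 * κ ^ 2 + 1)
            * (η * (P * M)) * (P * M) ^ 3
          + 16 * (κ ^ 2 + 1) ^ 2 * (κ ^ 2 - 1) * (κ ^ 4 - 4 * κ ^ 2 + 1)
            * (κ ^ 6 + 3 * κ ^ 4 + 5 * κ ^ 2 - 1) * (P * M) ^ 4 := by ring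
      _ = (-2 * (κ ^ 2 + 1) ^ 2 * N) ^ 4
          + 8 * (2 * κ ^ 2 - 1) * (-2 * (κ ^ 2 + 1) ^ 2 * N) ^ 3 * (P * M)
          - 8 * (κ ^ 8 - 4 * κ ^ 4 + 12 * κ ^ 2 - 3) * (-2 * (κ ^ 2 + 1) ^ 2 * N) ^ 2
            * (P * M) ^ 2
          - 32 * (2 * κ ^ 10 + 3 * κ ^ 8 + 8 * κ ^ 6 + 4 * κ ^ 4 - 6 * κ ^ 2 + 1)
            * (-2 * (κ ^ 2 + 1) ^ 2 * N) * (P * M) ^ 3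
          + 16 * (κ ^ 2 + 1) ^ 2 * (κ ^ 2 - 1) * (κ ^ 4 - 4 * κ ^ 2 + 1)
            * (κ ^ 6 + 3 * κ ^ 4 + 5 * κ ^ 2 - 1) * (P * M) ^ 4 := by rw [hη4]
      _ = _ := by ring
  -- first cleared term
  have hT1 : u ^ 6 * (X ^ 2 + 1) * (Y + 1) ^ 2 * D
      = 256 * κ ^ 8 * (κ ^ 2 - 1) ^ 2 * ζ ^ 2 * (M ^ 6 + ζ ^ 4 * P ^ 6) * (P * M) ^ 4 := by
    calc u ^ 6 * (X ^ 2 + 1) * (Y + 1) ^ 2 * D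
        = (u ^ 6 * (κ ^ 2 + 1) ^ 6) * ((X ^ 2 + 1) * (ζ ^ 4 * P ^ 6))
          * ((Y + 1) * ((κ * ζ - 1) * (ζ + κ))) ^ 2 * (P * M) ^ 4 := by rw [hDdef]; ring
      _ = 64 * κ ^ 8 * (M ^ 6 + ζ ^ 4 * P ^ 6) * (2 * ζ * (κ ^ 2 - 1)) ^ 2 * (P * M) ^ 4 := by
          rw [hu6, e1, hY2]
      _ = _ := by ring
  -- second cleared term
  have hT2 : X * Y * ((κ ^ 2 + 1) ^ 8)⁻¹ *
        (η ^ 4 + 8 * (2 * κ ^ 2 - 1) * η ^ 3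
          - 8 * (κ ^ 8 - 4 * κ ^ 4 + 12 * κ ^ 2 - 3) * η ^ 2
          - 32 * (2 * κ ^ 10 + 3 * κ ^ 8 + 8 * κ ^ 6 + 4 * κ ^ 4 - 6 * κ ^ 2 + 1) * η
          + 16 * (κ ^ 2 + 1) ^ 2 * (κ ^ 2 - 1) * (κ ^ 4 - 4 * κ ^ 2 + 1)
            * (κ ^ 6 + 3 * κ ^ 4 + 5 * κ ^ 2 - 1)) * D
      = -(M ^ 4 * ζ ^ 2 * P ^ 4 *
          (16 * (κ ^ 2 + 1) ^ 6 * N ^ 4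
            - 64 * (2 * κ ^ 2 - 1) * (κ ^ 2 + 1) ^ 4 * N ^ 3 * (P * M)
            - 32 * (κ ^ 8 - 4 * κ ^ 4 + 12 * κ ^ 2 - 3) * (κ ^ 2 + 1) ^ 2 * N ^ 2 * (P * M) ^ 2
            + 64 * (2 * κ ^ 10 + 3 * κ ^ 8 + 8 * κ ^ 6 + 4 * κ ^ 4 - 6 * κ ^ 2 + 1) * N
              * (P * M) ^ 3
            + 16 * (κ ^ 2 - 1) * (κ ^ 4 - 4 * κ ^ 2 + 1) * (κ ^ 6 + 3 * κ ^ 4 + 5 * κ ^ 2 - 1)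
              * (P * M) ^ 4)) := by
    have hC8 : ((κ ^ 2 + 1) ^ 8)⁻¹ * ((κ ^ 2 + 1) ^ 2 * (κ ^ 2 + 1) ^ 6) = 1 := by
      rw [← pow_add]
      exact inv_mul_cancel₀ (pow_ne_zero 8 hk2)
    calc X * Y * ((κ ^ 2 + 1) ^ 8)⁻¹ *
        (η ^ 4 + 8 * (2 * κ ^ 2 - 1) * η ^ 3
          - 8 * (κ ^ 8 - 4 * κ ^ 4 + 12 * κ ^ 2 - 3) * η ^ 2
          - 32 * (2 * κ ^ 10 + 3 * κ ^ 8 + 8 * κ ^ 6 + 4 * κ ^ 4 - 6 * κ ^ 2 + 1) * η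
          + 16 * (κ ^ 2 + 1) ^ 2 * (κ ^ 2 - 1) * (κ ^ 4 - 4 * κ ^ 2 + 1)
            * (κ ^ 6 + 3 * κ ^ 4 + 5 * κ ^ 2 - 1)) * D
        = (X * (ζ ^ 2 * P ^ 3)) * (Y * ((κ * ζ - 1) * (ζ + κ)) ^ 2)
          * ((η ^ 4 + 8 * (2 * κ ^ 2 - 1) * η ^ 3
            - 8 * (κ ^ 8 - 4 * κ ^ 4 + 12 * κ ^ 2 - 3) * η ^ 2
            - 32 * (2 * κ ^ 10 + 3 * κ ^ 8 + 8 * κ ^ 6 + 4 * κ ^ 4 - 6 * κ ^ 2 + 1) * η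
            + 16 * (κ ^ 2 + 1) ^ 2 * (κ ^ 2 - 1) * (κ ^ 4 - 4 * κ ^ 2 + 1)
              * (κ ^ 6 + 3 * κ ^ 4 + 5 * κ ^ 2 - 1)) * (P * M) ^ 4)
          * ((κ ^ 2 + 1) ^ 8)⁻¹ * (ζ ^ 2 * P ^ 3 * (κ ^ 2 + 1) ^ 6) := by rw [hDdef]; ring
      _ = M ^ 3 * (-(P * M))
          * ((κ ^ 2 + 1) ^ 2 *
            (16 * (κ ^ 2 + 1) ^ 6 * N ^ 4
              - 64 * (2 * κ ^ 2 - 1) * (κ ^ 2 + 1) ^ 4 * N ^ 3 * (P * M)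
              - 32 * (κ ^ 8 - 4 * κ ^ 4 + 12 * κ ^ 2 - 3) * (κ ^ 2 + 1) ^ 2 * N ^ 2
                * (P * M) ^ 2
              + 64 * (2 * κ ^ 10 + 3 * κ ^ 8 + 8 * κ ^ 6 + 4 * κ ^ 4 - 6 * κ ^ 2 + 1) * N
                * (P * M) ^ 3
              + 16 * (κ ^ 2 - 1) * (κ ^ 4 - 4 * κ ^ 2 + 1) * (κ ^ 6 + 3 * κ ^ 4 + 5 * κ ^ 2 - 1)
                * (P * M) ^ 4))
          * ((κ ^ 2 + 1) ^ 8)⁻¹ * (ζ ^ 2 * P ^ 3 * (κ ^ 2 + 1) ^ 6) := by rw [hX3, hY3, e4]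
      _ = (((κ ^ 2 + 1) ^ 8)⁻¹ * ((κ ^ 2 + 1) ^ 2 * (κ ^ 2 + 1) ^ 6)) *
          (M ^ 3 * (-(P * M)) *
            (16 * (κ ^ 2 + 1) ^ 6 * N ^ 4
              - 64 * (2 * κ ^ 2 - 1) * (κ ^ 2 + 1) ^ 4 * N ^ 3 * (P * M)
              - 32 * (κ ^ 8 - 4 * κ ^ 4 + 12 * κ ^ 2 - 3) * (κ ^ 2 + 1) ^ 2 * N ^ 2
                * (P * M) ^ 2
              + 64 * (2 * κ ^ 10 + 3 * κ ^ 8 + 8 * κ ^ 6 + 4 * κ ^ 4 - 6 * κ ^ 2 + 1) * N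
                * (P * M) ^ 3
              + 16 * (κ ^ 2 - 1) * (κ ^ 4 - 4 * κ ^ 2 + 1) * (κ ^ 6 + 3 * κ ^ 4 + 5 * κ ^ 2 - 1)
                * (P * M) ^ 4)
            * (ζ ^ 2 * P ^ 3)) := by ring
      _ = _ := by rw [hC8]; ring
  -- the key polynomial identity in κ, ζ
  have key : 256 * κ ^ 8 * (κ ^ 2 - 1) ^ 2 * ζ ^ 2 * (M ^ 6 + ζ ^ 4 * P ^ 6) * (P * M) ^ 4
      + -(M ^ 4 * ζ ^ 2 * P ^ 4 *
          (16 * (κ ^ 2 + 1) ^ 6 * N ^ 4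
            - 64 * (2 * κ ^ 2 - 1) * (κ ^ 2 + 1) ^ 4 * N ^ 3 * (P * M)
            - 32 * (κ ^ 8 - 4 * κ ^ 4 + 12 * κ ^ 2 - 3) * (κ ^ 2 + 1) ^ 2 * N ^ 2 * (P * M) ^ 2
            + 64 * (2 * κ ^ 10 + 3 * κ ^ 8 + 8 * κ ^ 6 + 4 * κ ^ 4 - 6 * κ ^ 2 + 1) * N
              * (P * M) ^ 3
            + 16 * (κ ^ 2 - 1) * (κ ^ 4 - 4 * κ ^ 2 + 1) * (κ ^ 6 + 3 * κ ^ 4 + 5 * κ ^ 2 - 1)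
              * (P * M) ^ 4)) = 0 := by
    rw [hPdef, hMdef, hNdef]
    ring
  have final : (u ^ 6 * (X ^ 2 + 1) * (Y + 1) ^ 2 +
      X * Y * ((κ ^ 2 + 1) ^ 8)⁻¹ *
        (η ^ 4 + 8 * (2 * κ ^ 2 - 1) * η ^ 3
          - 8 * (κ ^ 8 - 4 * κ ^ 4 + 12 * κ ^ 2 - 3) * η ^ 2
          - 32 * (2 * κ ^ 10 + 3 * κ ^ 8 + 8 * κ ^ 6 + 4 * κ ^ 4 - 6 * κ ^ 2 + 1) * η
          + 16 * (κ ^ 2 + 1) ^ 2 * (κ ^ 2 - 1) * (κ ^ 4 - 4 * κ ^ 2 + 1)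
            * (κ ^ 6 + 3 * κ ^ 4 + 5 * κ ^ 2 - 1))) * D = 0 := by
    rw [add_mul, hT1, hT2, key]
  exact (mul_eq_zero.mp final).resolve_right hD
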